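/- For all real numbers a > 0 and b > 0, the complete elliptic integral Z(a,b) = ∫₀^{π/2} (a²·cos²θ + b²·sin²θ)^{-1/2} dθ is invariant under the Landen–Gauss arithmetic–geometric-mean step, i.e. ∫₀^{π/2} (a²·cos²θ + b²·sin²θ)^{-1/2} dθ = ∫₀^{π/2} (((a+b)/2)²·cos²θ + a·b·sin²θ)^{-1/2} dθ. -/

import Mathlib

open Real MeasureTheory

namespace LandenAux

open Set

/-- helper: `t ^ (-(1/2)) = (√t)⁻¹` for positive `t`. -/
lemma rpow_neg_half (t : ℝ) (ht : 0 ≤ t) : t ^ (-(1 / 2) : ℝ) = (Real.sqrt t)⁻¹ := by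
  rw [Real.rpow_neg ht, Real.sqrt_eq_rpow]

/-- the rational integrand -/
noncomputable def g (a b x : ℝ) : ℝ := ((a ^ 2 + x ^ 2) * (b ^ 2 + x ^ 2)) ^ (-(1 / 2) : ℝ)

lemma g_base_pos (a b x : ℝ) (ha : 0 < a) (hb : 0 < b) :
    0 < (a ^ 2 + x ^ 2) * (b ^ 2 + x ^ 2) := by positivity

lemma g_cont (a b : ℝ) (ha : 0 < a) (hb : 0 < b) : Continuous (g a b) := by
  apply Continuous.rpow_const (by fun_prop)
  intro x
  exact Or.inl (g_base_pos a b x ha hb).ne'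

lemma g_integrable (a b : ℝ) (ha : 0 < a) (hb : 0 < b) : Integrable (g a b) := by
  set m := min a b with hm
  have hm0 : 0 < m := lt_min ha hb
  have hmaj : Integrable (fun x : ℝ => (1 + (x / m) ^ 2)⁻¹ * (m ^ 2)⁻¹) := by
    exact (integrable_inv_one_add_sq.comp_div hm0.ne').mul_const _
  apply hmaj.mono' ((g_cont a b ha hb).aestronglyMeasurable)
  filter_upwards with x
  have h1 : (m ^ 2 + x ^ 2) ^ 2 ≤ (a ^ 2 + x ^ 2) * (b ^ 2 + x ^ 2) := by
    have h2 : m ≤ a := min_le_left a b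
    have h3 : m ≤ b := min_le_right a b
    have ha2 : m ^ 2 ≤ a ^ 2 := by nlinarith
    have hb2 : m ^ 2 ≤ b ^ 2 := by nlinarith
    nlinarith [sq_nonneg x, mul_le_mul ha2 hb2 (by positivity : (0:ℝ) ≤ m ^ 2) (by positivity : (0:ℝ) ≤ a ^ 2)]
  have hpos : (0:ℝ) < (m ^ 2 + x ^ 2) ^ 2 := by positivity
  have : g a b x ≤ ((m ^ 2 + x ^ 2) ^ 2) ^ (-(1 / 2) : ℝ) :=
    Real.rpow_le_rpow_of_nonpos hpos h1 (by norm_num)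
  have heq : ((m ^ 2 + x ^ 2) ^ 2) ^ (-(1 / 2) : ℝ) = (m ^ 2 + x ^ 2)⁻¹ := by
    rw [← Real.rpow_natCast (m ^ 2 + x ^ 2) 2, ← Real.rpow_mul (by positivity)]
    norm_num [Real.rpow_neg_one]
  have hg0 : 0 ≤ g a b x := Real.rpow_nonneg (g_base_pos a b x ha hb).le _
  have hbd : (1 + (x / m) ^ 2)⁻¹ * (m ^ 2)⁻¹ = (m ^ 2 + x ^ 2)⁻¹ := by
    rw [← mul_inv]
    congr 1
    field_simp
  rw [Real.norm_of_nonneg hg0, hbd]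
  calc g a b x ≤ ((m ^ 2 + x ^ 2) ^ 2) ^ (-(1 / 2) : ℝ) := this
    _ = (m ^ 2 + x ^ 2)⁻¹ := heq

/-- Step 1: the trigonometric integral equals the rational integral on `(0,∞)`. -/
lemma step1 (a b : ℝ) (ha : 0 < a) (hb : 0 < b) :
    (∫ θ in (0:ℝ)..(Real.pi / 2),
        (a ^ 2 * Real.cos θ ^ 2 + b ^ 2 * Real.sin θ ^ 2) ^ (-(1 / 2) : ℝ)) =
    ∫ x in Ioi (0:ℝ), g a b x := by
  have hpi : (0:ℝ) < Real.pi / 2 := by positivity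
  have himg : (fun θ => b * Real.tan θ) '' Ioo 0 (Real.pi / 2) = Ioi (0:ℝ) := by
    ext x
    constructor
    · rintro ⟨θ, ⟨h0, h1⟩, rfl⟩
      exact mul_pos hb (Real.tan_pos_of_pos_of_lt_pi_div_two h0 h1)
    · intro hx
      have hx' : (0:ℝ) < x := hx
      refine ⟨Real.arctan (x / b), ⟨?_, Real.arctan_lt_pi_div_two _⟩, ?_⟩
      · have := Real.arctan_strictMono (div_pos hx' hb)
        rwa [Real.arctan_zero] at this
      · show b * Real.tan (Real.arctan (x / b)) = x
        rw [Real.tan_arctan]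
        field_simp
  have hsub : Ioo (0:ℝ) (Real.pi / 2) ⊆ Ioo (-(Real.pi / 2)) (Real.pi / 2) := by
    intro θ hθ
    exact ⟨by linarith [hθ.1], hθ.2⟩
  have hinj : InjOn (fun θ => b * Real.tan θ) (Ioo 0 (Real.pi / 2)) := by
    intro θ₁ h1 θ₂ h2 h
    exact Real.injOn_tan (hsub h1) (hsub h2) (mul_left_cancel₀ hb.ne' h)
  have hderiv : ∀ θ ∈ Ioo (0:ℝ) (Real.pi / 2), HasDerivWithinAt (fun θ => b * Real.tan θ)
      (b * (1 / Real.cos θ ^ 2)) (Ioo 0 (Real.pi / 2)) θ := by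
    intro θ hθ
    have hc : Real.cos θ ≠ 0 := (Real.cos_pos_of_mem_Ioo (hsub hθ)).ne'
    exact ((Real.hasDerivAt_tan hc).const_mul b).hasDerivWithinAt
  have hcv := MeasureTheory.integral_image_eq_integral_abs_deriv_smul measurableSet_Ioo
      hderiv hinj (g a b)
  rw [himg] at hcv
  rw [hcv, intervalIntegral.integral_of_le hpi.le, MeasureTheory.integral_Ioc_eq_integral_Ioo]
  apply MeasureTheory.setIntegral_congr_fun measurableSet_Ioo
  intro θ hθ
  have hc : 0 < Real.cos θ := Real.cos_pos_of_mem_Ioo (hsub hθ)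
  have hsc : Real.sin θ ^ 2 + Real.cos θ ^ 2 = 1 := Real.sin_sq_add_cos_sq θ
  have hb1 : 0 < a ^ 2 * Real.cos θ ^ 2 + b ^ 2 * Real.sin θ ^ 2 := by positivity
  have ha' : a ^ 2 + (b * Real.tan θ) ^ 2
      = (a ^ 2 * Real.cos θ ^ 2 + b ^ 2 * Real.sin θ ^ 2) / Real.cos θ ^ 2 := by
    rw [Real.tan_eq_sin_div_cos]
    field_simp
  have hb' : b ^ 2 + (b * Real.tan θ) ^ 2 = b ^ 2 / Real.cos θ ^ 2 := by
    rw [Real.tan_eq_sin_div_cos]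
    field_simp
    linear_combination hsc
  have key : (a ^ 2 + (b * Real.tan θ) ^ 2) * (b ^ 2 + (b * Real.tan θ) ^ 2)
      = (b / Real.cos θ ^ 2) ^ 2 * (a ^ 2 * Real.cos θ ^ 2 + b ^ 2 * Real.sin θ ^ 2) := by
    rw [ha', hb']
    field_simp
  simp only [g, smul_eq_mul]
  rw [key, rpow_neg_half ((b / Real.cos θ ^ 2) ^ 2
        * (a ^ 2 * Real.cos θ ^ 2 + b ^ 2 * Real.sin θ ^ 2)) (by positivity),
      rpow_neg_half _ hb1.le,
      Real.sqrt_mul (sq_nonneg _),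
      Real.sqrt_sq (by positivity : (0:ℝ) ≤ b / Real.cos θ ^ 2),
      abs_of_pos (by positivity : (0:ℝ) < b * (1 / Real.cos θ ^ 2)), mul_inv]
  have hs0 : (0:ℝ) < Real.sqrt (a ^ 2 * Real.cos θ ^ 2 + b ^ 2 * Real.sin θ ^ 2) :=
    Real.sqrt_pos.mpr hb1
  field_simp

/-- the Gauss substitution map -/
noncomputable def gauss (a b x : ℝ) : ℝ := (x - a * b / x) / 2

/-- Step 2: Gauss substitution. -/
lemma step2 (a b : ℝ) (ha : 0 < a) (hb : 0 < b) :
    (∫ x in Ioi (0:ℝ), g ((a + b) / 2) (Real.sqrt (a * b)) x) = ∫ x in Ioi (0:ℝ), g a b x := by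
  set A := (a + b) / 2 with hA
  set r := Real.sqrt (a * b) with hrdef
  have hab : 0 < a * b := by positivity
  have hr : 0 < r := Real.sqrt_pos.mpr hab
  have hr2 : r ^ 2 = a * b := Real.sq_sqrt hab.le
  have hA0 : 0 < A := by rw [hA]; linarith
  -- derivative
  have hderiv : ∀ x : ℝ, 0 < x →
      HasDerivAt (gauss a b) ((x ^ 2 + a * b) / (2 * x ^ 2)) x := by
    intro x hx
    have h1 : HasDerivAt (fun x : ℝ => (x - a * b * x⁻¹) / 2)
        ((1 - a * b * (-(x ^ 2)⁻¹)) / 2) x :=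
      (((hasDerivAt_id x).sub ((hasDerivAt_inv hx.ne').const_mul (a * b)))).div_const 2
    have h2 : (1 - a * b * (-(x ^ 2)⁻¹)) / 2 = (x ^ 2 + a * b) / (2 * x ^ 2) := by
      rw [div_eq_div_iff (by norm_num) (by positivity : (2 * x ^ 2 : ℝ) ≠ 0)]
      field_simp
      ring
    rw [h2] at h1
    have hfun : gauss a b = fun x : ℝ => (x - a * b * x⁻¹) / 2 := by
      funext y
      simp [gauss, div_eq_mul_inv]
    rw [hfun]
    exact h1
  -- injectivity
  have hmono : StrictMonoOn (gauss a b) (Ioi 0) := by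
    intro x hx y hy hxy
    have hx0 : (0:ℝ) < x := hx
    have hd : a * b / y < a * b / x := div_lt_div_of_pos_left hab hx0 hxy
    unfold gauss
    linarith
  -- pointwise identity
  have hpt : ∀ x : ℝ, 0 < x →
      |(x ^ 2 + a * b) / (2 * x ^ 2)| • g A r (gauss a b x) = 2 * g a b x := by
    intro x hx
    have hX : 0 < (a ^ 2 + x ^ 2) * (b ^ 2 + x ^ 2) := by positivity
    have key : (A ^ 2 + gauss a b x ^ 2) * (r ^ 2 + gauss a b x ^ 2)
        = ((x ^ 2 + a * b) / (4 * x ^ 2)) ^ 2 * ((a ^ 2 + x ^ 2) * (b ^ 2 + x ^ 2)) := by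
      rw [hr2, hA]
      unfold gauss
      field_simp
      ring
    simp only [g, smul_eq_mul]
    rw [key, rpow_neg_half (((x ^ 2 + a * b) / (4 * x ^ 2)) ^ 2
          * ((a ^ 2 + x ^ 2) * (b ^ 2 + x ^ 2))) (by positivity),
        rpow_neg_half _ hX.le,
        Real.sqrt_mul (sq_nonneg _),
        Real.sqrt_sq (by positivity : (0:ℝ) ≤ (x ^ 2 + a * b) / (4 * x ^ 2)),
        abs_of_pos (by positivity : (0:ℝ) < (x ^ 2 + a * b) / (2 * x ^ 2)), mul_inv]
    have hs0 : (0:ℝ) < Real.sqrt ((a ^ 2 + x ^ 2) * (b ^ 2 + x ^ 2)) := Real.sqrt_pos.mpr hX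
    have hq : (0:ℝ) < x ^ 2 + a * b := by positivity
    field_simp
    ring
  -- images
  have himg1 : gauss a b '' Ioi r = Ioi 0 := by
    ext u
    constructor
    · rintro ⟨x, hx, rfl⟩
      have hx0 : 0 < x := lt_trans hr hx
      have hx' : r < x := hx
      have : a * b < x ^ 2 := by
        nlinarith [mul_pos (sub_pos.mpr hx') (by linarith : (0:ℝ) < x + r)]
      have : a * b / x < x := by rw [div_lt_iff₀ hx0]; nlinarith
      show (0:ℝ) < (x - a * b / x) / 2
      linarith
    · intro hu
      have hu0 : (0:ℝ) < u := hu
      set w := u + Real.sqrt (u ^ 2 + a * b) with hw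
      have hs2 : Real.sqrt (u ^ 2 + a * b) ^ 2 = u ^ 2 + a * b :=
        Real.sq_sqrt (by positivity)
      have hsr : r ≤ Real.sqrt (u ^ 2 + a * b) :=
        Real.sqrt_le_sqrt (by nlinarith [sq_nonneg u])
      have hwr : r < w := by rw [hw]; linarith
      have hw0 : 0 < w := lt_trans hr hwr
      refine ⟨w, hwr, ?_⟩
      show (w - a * b / w) / 2 = u
      have hq : a * b / w = w - 2 * u := by
        rw [eq_sub_iff_add_eq, div_add' _ _ _ hw0.ne', div_eq_iff hw0.ne']
        rw [hw]
        nlinarith [hs2]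
      rw [hq]
      ring
  have himg2 : gauss a b '' Ioo 0 r = Iio 0 := by
    ext u
    constructor
    · rintro ⟨x, hx, rfl⟩
      have hx0 : 0 < x := hx.1
      have hx' : x < r := hx.2
      have : x ^ 2 < a * b := by
        nlinarith [mul_pos (sub_pos.mpr hx') (by linarith : (0:ℝ) < x + r)]
      have : x < a * b / x := by rw [lt_div_iff₀ hx0]; nlinarith
      show (x - a * b / x) / 2 < 0
      linarith
    · intro hu
      have hu0 : u < (0:ℝ) := hu
      set w := u + Real.sqrt (u ^ 2 + a * b) with hw
      have hs2 : Real.sqrt (u ^ 2 + a * b) ^ 2 = u ^ 2 + a * b :=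
        Real.sq_sqrt (by positivity)
      have habs : |u| < Real.sqrt (u ^ 2 + a * b) := by
        rw [← Real.sqrt_sq_eq_abs]
        exact Real.sqrt_lt_sqrt (sq_nonneg u) (by linarith)
      have hw0 : 0 < w := by
        rw [hw]
        have := neg_abs_le u
        linarith
      have hwr : w < r := by
        have h1 : Real.sqrt (u ^ 2 + a * b) < r - u := by
          rw [Real.sqrt_lt' (by linarith)]
          nlinarith [hr2]
        rw [hw]
        linarith
      refine ⟨w, ⟨hw0, hwr⟩, ?_⟩
      show (w - a * b / w) / 2 = u
      have hq : a * b / w = w - 2 * u := by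
        rw [eq_sub_iff_add_eq, div_add' _ _ _ hw0.ne', div_eq_iff hw0.ne']
        rw [hw]
        nlinarith [hs2]
      rw [hq]
      ring
  -- change of variables on the two pieces
  have hd1 : ∀ x ∈ Ioi r, HasDerivWithinAt (gauss a b) ((x ^ 2 + a * b) / (2 * x ^ 2)) (Ioi r) x :=
    fun x hx => (hderiv x (lt_trans hr hx)).hasDerivWithinAt
  have hd2 : ∀ x ∈ Ioo 0 r,
      HasDerivWithinAt (gauss a b) ((x ^ 2 + a * b) / (2 * x ^ 2)) (Ioo 0 r) x :=
    fun x hx => (hderiv x hx.1).hasDerivWithinAt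
  have hinj1 : InjOn (gauss a b) (Ioi r) :=
    (hmono.injOn).mono (fun x hx => lt_trans hr hx)
  have hinj2 : InjOn (gauss a b) (Ioo 0 r) := (hmono.injOn).mono (fun x hx => hx.1)
  have E1 : (∫ u in Ioi (0:ℝ), g A r u) = ∫ x in Ioi r, 2 * g a b x := by
    rw [← himg1,
      MeasureTheory.integral_image_eq_integral_abs_deriv_smul measurableSet_Ioi hd1 hinj1 (g A r)]
    exact MeasureTheory.setIntegral_congr_fun measurableSet_Ioi
      (fun x hx => hpt x (lt_trans hr hx))
  have E2 : (∫ u in Iio (0:ℝ), g A r u) = ∫ x in Ioo 0 r, 2 * g a b x := by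
    rw [← himg2,
      MeasureTheory.integral_image_eq_integral_abs_deriv_smul measurableSet_Ioo hd2 hinj2 (g A r)]
    exact MeasureTheory.setIntegral_congr_fun measurableSet_Ioo (fun x hx => hpt x hx.1)
  -- evenness
  have E3 : (∫ u in Iio (0:ℝ), g A r u) = ∫ u in Ioi (0:ℝ), g A r u := by
    have h2 : ∀ u : ℝ, g A r (-u) = g A r u := fun u => by simp [g, neg_sq]
    have h1 : (∫ u in Ioi (0:ℝ), g A r u) = ∫ u in Iic (0:ℝ), g A r u := by
      simpa [h2] using integral_comp_neg_Ioi 0 (g A r)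
    rw [MeasureTheory.integral_Iic_eq_integral_Iio] at h1
    exact h1.symm
  -- splitting the half line
  have hint : Integrable (fun x => 2 * g a b x) := (g_integrable a b ha hb).const_mul 2
  have hsplit : (∫ x in Ioo 0 r, 2 * g a b x) + (∫ x in Ioi r, 2 * g a b x)
      = ∫ x in Ioi (0:ℝ), 2 * g a b x := by
    rw [← MeasureTheory.integral_Ici_eq_integral_Ioi (x := r),
      ← MeasureTheory.setIntegral_union (by
        rw [Set.disjoint_left]
        rintro x ⟨_, h2⟩ h3
        exact absurd h3 (not_le.mpr h2)) measurableSet_Ici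
        hint.integrableOn hint.integrableOn,
      Set.Ioo_union_Ici_eq_Ioi hr]
  have h2g : (∫ x in Ioi (0:ℝ), 2 * g a b x) = 2 * ∫ x in Ioi (0:ℝ), g a b x :=
    MeasureTheory.integral_const_mul 2 _
  have hfin : 2 * (∫ u in Ioi (0:ℝ), g A r u) = 2 * ∫ x in Ioi (0:ℝ), g a b x := by
    calc 2 * (∫ u in Ioi (0:ℝ), g A r u)
        = (∫ u in Iio (0:ℝ), g A r u) + (∫ u in Ioi (0:ℝ), g A r u) := by rw [E3]; ring
      _ = (∫ x in Ioo 0 r, 2 * g a b x) + (∫ x in Ioi r, 2 * g a b x) := by rw [E1, E2]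
      _ = 2 * ∫ x in Ioi (0:ℝ), g a b x := by rw [hsplit, h2g]
  linarith

end LandenAux

/-- Landen–Gauss invariance of the complete elliptic integral
`Z(a,b) = ∫₀^{π/2} (a² cos²θ + b² sin²θ)^{-1/2} dθ` under the AGM step
`(a,b) ↦ ((a+b)/2, √(ab))`. -/
theorem landen_gauss_agm_invariance (a b : ℝ) (ha : 0 < a) (hb : 0 < b) :
    (∫ θ in (0:ℝ)..(Real.pi / 2),
        (a ^ 2 * Real.cos θ ^ 2 + b ^ 2 * Real.sin θ ^ 2) ^ (-(1 / 2) : ℝ)) =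
    ∫ θ in (0:ℝ)..(Real.pi / 2),
        (((a + b) / 2) ^ 2 * Real.cos θ ^ 2 + a * b * Real.sin θ ^ 2) ^ (-(1 / 2) : ℝ) := by
  have hA : 0 < (a + b) / 2 := by linarith
  have hG : 0 < Real.sqrt (a * b) := Real.sqrt_pos.mpr (by positivity)
  have h1 := LandenAux.step1 a b ha hb
  have h2 := LandenAux.step1 ((a + b) / 2) (Real.sqrt (a * b)) hA hG
  have h3 := LandenAux.step2 a b ha hb
  rw [h1, ← h3, ← h2]
  congr 1
  ext θ
  rw [Real.sq_sqrt (by positivity : (0:ℝ) ≤ a * b)]
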